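/- In the separable case, the general variance formula reduces: with D_k = d̃_k D and D_0 = d̃_0 D, one has Θ_K² = d̃_0² Ω_K² where Ω_K² = γ[(μ₄ − 1) + ρ²γγ̃/(1 − ρ²γγ̃)], γ = (1/K)tr(D²T²), γ̃ = (1/K)tr(D̃²T̃²), T = (1/ρ)(I + δ̃D)^{-1}, T̃ = (1/ρ)(I + δD̃)^{-1}. -/

import Mathlib

open Matrix

set_option maxHeartbeats 2000000 in
/-- In the separable case `σ²_{nk} = dₙ d̃ₖ` (with `D_k = d̃ₖ D`, `D_0 = d̃₀ D`), the
general variance `Θ² = (μ₄−1)(1/K)tr(D₀²T²) + (1/K)gᵀ(I−A)⁻¹Δ⁻¹g` of Theorem 2 reduces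
to `Θ² = d̃₀² Ω²` with `Ω² = γ[(μ₄−1) + ρ²γγ̃/(1−ρ²γγ̃)]`, where `γ = (1/K)tr(D²T²)`,
`γ̃ = (1/K)tr(D̃²T̃²)`, `T = (1/ρ)(I+δ̃D)⁻¹`, `T̃ = (1/ρ)(I+δD̃)⁻¹`. -/
theorem stmt17 (N K : ℕ) (hK : 0 < K) (ρ : ℝ) (hρ : 0 < ρ)
    (d : Fin N → ℝ) (dt : Fin K → ℝ) (dt0 : ℝ)
    (hd : ∀ n, 0 ≤ d n) (hdt : ∀ k, 0 ≤ dt k) (hdt0 : 0 ≤ dt0)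
    (hd' : ∃ n, 0 < d n) (hdt' : ∃ k, 0 < dt k)
    (μ₄ : ℝ) (hμ₄ : 1 ≤ μ₄)
    (δ δt : ℝ) (hδ : 0 < δ) (hδt : 0 < δt)
    (hfix : δ = (1 / K) * ∑ n, d n / (ρ * (1 + δt * d n)))
    (hfixt : δt = (1 / K) * ∑ k, dt k / (ρ * (1 + δ * dt k)))
    (t : Fin N → ℝ) (ht : ∀ n, t n = 1 / (ρ * (1 + δt * d n)))
    (tt : Fin K → ℝ) (htt : ∀ k, tt k = 1 / (ρ * (1 + δ * dt k)))
    (γ γt : ℝ)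
    (hγ : γ = (1 / K) * ∑ n, (d n) ^ 2 * (t n) ^ 2)
    (hγt : γt = (1 / K) * ∑ k, (dt k) ^ 2 * (tt k) ^ 2)
    (A : Matrix (Fin K) (Fin K) ℝ)
    (hA : ∀ l m, A l m = (1 / K) *
      ((1 / K) * ∑ n, (dt l * d n) * (dt m * d n) * (t n) ^ 2) /
      (1 + (1 / K) * ∑ n, dt l * d n * t n) ^ 2)
    (Δ : Matrix (Fin K) (Fin K) ℝ)
    (hΔ : Δ = Matrix.diagonal fun l => (1 + (1 / K) * ∑ n, dt l * d n * t n) ^ 2)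
    (g : Fin K → ℝ)
    (hg : ∀ l, g l = (1 / K) * ∑ n, (dt0 * d n) * (dt l * d n) * (t n) ^ 2)
    (Θsq Ωsq : ℝ)
    (hΘ : Θsq = (μ₄ - 1) * ((1 / K) * ∑ n, (dt0 * d n) ^ 2 * (t n) ^ 2)
        + (1 / K) * (g ⬝ᵥ (((1 - A)⁻¹ * Δ⁻¹) *ᵥ g)))
    (hΩ : Ωsq = γ * ((μ₄ - 1) + ρ ^ 2 * γ * γt / (1 - ρ ^ 2 * γ * γt))) :
    Θsq = dt0 ^ 2 * Ωsq := by
  obtain ⟨n0, hn0⟩ := hd'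
  obtain ⟨k0, hk0⟩ := hdt'
  have hKne : (K : ℝ) ≠ 0 := Nat.cast_ne_zero.mpr hK.ne'
  have hKpos : (0 : ℝ) < K := Nat.cast_pos.mpr hK
  have hPn : ∀ n, 0 < 1 + δt * d n := by
    intro n; have := mul_nonneg hδt.le (hd n); linarith
  have hQk : ∀ k, 0 < 1 + δ * dt k := by
    intro k; have := mul_nonneg hδ.le (hdt k); linarith
  have htpos : ∀ n, 0 < t n := by
    intro n; rw [ht n]; have := hPn n; positivity
  have httpos : ∀ k, 0 < tt k := by
    intro k; rw [htt k]; have := hQk k; positivity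
  have hne2 : ∀ k, ((1 + δ * dt k) ^ 2 : ℝ) ≠ 0 := fun k => pow_ne_zero 2 (hQk k).ne'
  -- sums
  have hsum1 : ∑ n, d n * t n = K * δ := by
    have h1 : ∀ n ∈ Finset.univ, d n * t n = d n / (ρ * (1 + δt * d n)) := by
      intro n _; rw [ht n]; ring
    rw [Finset.sum_congr rfl h1, hfix]; field_simp; exact Finset.sum_congr rfl fun n _ => by ring
  have hsumγ : ∑ n, (d n) ^ 2 * (t n) ^ 2 = K * γ := by rw [hγ]; field_simp
  have hsumγt : ∑ k, (dt k) ^ 2 * (tt k) ^ 2 = K * γt := by rw [hγt]; field_simp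
  have hSe : ∑ k, (dt k) ^ 2 / (1 + δ * dt k) ^ 2 = ρ ^ 2 * (K * γt) := by
    rw [← hsumγt, Finset.mul_sum]
    refine Finset.sum_congr rfl fun k _ => ?_
    rw [htt k]
    field_simp
  have hdot : ∀ l, (1 / K : ℝ) * ∑ n, dt l * d n * t n = dt l * δ := by
    intro l
    have h1 : ∑ n, dt l * d n * t n = dt l * ∑ n, d n * t n := by
      rw [Finset.mul_sum]; exact Finset.sum_congr rfl fun n _ => by ring
    rw [h1, hsum1]; field_simp
  -- structural identities
  have hAe : ∀ l m, A l m = γ / K * (dt l * dt m) / (1 + δ * dt l) ^ 2 := by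
    intro l m
    have h1 : ∑ n, (dt l * d n) * (dt m * d n) * (t n) ^ 2 = dt l * dt m * (K * γ) := by
      rw [← hsumγ, Finset.mul_sum]; exact Finset.sum_congr rfl fun n _ => by ring
    rw [hA l m, h1, hdot l]
    have h2 : (1 : ℝ) + dt l * δ = 1 + δ * dt l := by ring
    rw [h2]
    have h3 : (1 / (K:ℝ)) * ((1 / (K:ℝ)) * (dt l * dt m * ((K:ℝ) * γ))) = γ / K * (dt l * dt m) := by
      field_simp
    rw [h3]
  have hΔ' : Δ = Matrix.diagonal fun l => (1 + δ * dt l) ^ 2 := by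
    have h1 : (fun l => (1 + (1 / (K:ℝ)) * ∑ n, dt l * d n * t n) ^ 2)
        = fun l => (1 + δ * dt l) ^ 2 := by
      funext l; rw [hdot l]; ring
    rw [hΔ, h1]
  have hg' : ∀ l, g l = dt0 * γ * dt l := by
    intro l
    have h1 : ∑ n, (dt0 * d n) * (dt l * d n) * (t n) ^ 2 = dt0 * dt l * (K * γ) := by
      rw [← hsumγ, Finset.mul_sum]; exact Finset.sum_congr rfl fun n _ => by ring
    rw [hg l, h1]; field_simp
  -- positivity of γ, γt
  have hγpos : 0 < γ := by
    rw [hγ]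
    refine mul_pos (by positivity) (Finset.sum_pos' (fun n _ => by positivity) ⟨n0, Finset.mem_univ n0, ?_⟩)
    have := htpos n0; positivity
  have hγtpos : 0 < γt := by
    rw [hγt]
    refine mul_pos (by positivity) (Finset.sum_pos' (fun k _ => by positivity) ⟨k0, Finset.mem_univ k0, ?_⟩)
    have := httpos k0; positivity
  -- key inequality ρ²γγt < 1
  have hpt : ∀ n, ρ * δt * ((d n) ^ 2 * (t n) ^ 2) ≤ d n * t n := by
    intro n
    have hP := hPn n
    have h1 : ρ * δt * ((d n) ^ 2 * (t n) ^ 2) = δt * (d n) ^ 2 / (ρ * (1 + δt * d n) ^ 2) := by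
      rw [ht n]; field_simp
    have h2 : d n * t n = d n / (ρ * (1 + δt * d n)) := by rw [ht n]; ring
    rw [h1, h2, div_le_div_iff₀ (by positivity) (by positivity)]
    nlinarith [mul_nonneg (mul_nonneg (hd n) hρ.le) (hPn n).le]
  have hpt0 : ρ * δt * ((d n0) ^ 2 * (t n0) ^ 2) < d n0 * t n0 := by
    have hP := hPn n0
    have h1 : ρ * δt * ((d n0) ^ 2 * (t n0) ^ 2) = δt * (d n0) ^ 2 / (ρ * (1 + δt * d n0) ^ 2) := by
      rw [ht n0]; field_simp
    have h2 : d n0 * t n0 = d n0 / (ρ * (1 + δt * d n0)) := by rw [ht n0]; ring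
    rw [h1, h2, div_lt_div_iff₀ (by positivity) (by positivity)]
    nlinarith [mul_pos (mul_pos hn0 hρ) (hPn n0)]
  have hkey1 : ρ * δt * γ < δ := by
    have hsum : ∑ n, ρ * δt * ((d n) ^ 2 * (t n) ^ 2) < ∑ n, d n * t n :=
      Finset.sum_lt_sum (fun n _ => hpt n) ⟨n0, Finset.mem_univ n0, hpt0⟩
    rw [← Finset.mul_sum, hsumγ, hsum1] at hsum
    nlinarith [hsum, hKpos]
  have hpt2 : ∀ k, ρ * δ * ((dt k) ^ 2 * (tt k) ^ 2) ≤ dt k * tt k := by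
    intro k
    have hQ := hQk k
    have h1 : ρ * δ * ((dt k) ^ 2 * (tt k) ^ 2) = δ * (dt k) ^ 2 / (ρ * (1 + δ * dt k) ^ 2) := by
      rw [htt k]; field_simp
    have h2 : dt k * tt k = dt k / (ρ * (1 + δ * dt k)) := by rw [htt k]; ring
    rw [h1, h2, div_le_div_iff₀ (by positivity) (by positivity)]
    nlinarith [mul_nonneg (mul_nonneg (hdt k) hρ.le) (hQk k).le]
  have hkey2 : ρ * δ * γt ≤ δt := by
    have hsum1t : ∑ k, dt k * tt k = K * δt := by
      have h1 : ∀ k ∈ Finset.univ, dt k * tt k = dt k / (ρ * (1 + δ * dt k)) := by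
        intro k _; rw [htt k]; ring
      rw [Finset.sum_congr rfl h1, hfixt]; field_simp; exact Finset.sum_congr rfl fun n _ => by ring
    have hsum : ∑ k, ρ * δ * ((dt k) ^ 2 * (tt k) ^ 2) ≤ ∑ k, dt k * tt k :=
      Finset.sum_le_sum fun k _ => hpt2 k
    rw [← Finset.mul_sum, hsumγt, hsum1t] at hsum
    nlinarith [hsum, hKpos]
  have hc1 : ρ ^ 2 * γ * γt < 1 := by
    have p1 : 0 < ρ * δ * γt := by positivity
    have h1 : (ρ * δt * γ) * (ρ * δ * γt) < δ * (ρ * δ * γt) :=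
      mul_lt_mul_of_pos_right hkey1 p1
    have h2 : δ * (ρ * δ * γt) ≤ δ * δt := by nlinarith [hkey2, hδ]
    nlinarith [h1, h2, mul_pos hδ hδt]
  have h1c : (1 - ρ ^ 2 * γ * γt) ≠ 0 := by nlinarith [hc1]
  -- Δ inverse
  have hΔinv : Δ⁻¹ = Matrix.diagonal fun l => ((1 + δ * dt l) ^ 2)⁻¹ := by
    apply Matrix.inv_eq_right_inv
    rw [hΔ', Matrix.diagonal_mul_diagonal]
    have h1 : (fun i => (1 + δ * dt i) ^ 2 * ((1 + δ * dt i) ^ 2)⁻¹) = fun _ => (1:ℝ) :=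
      funext fun l => mul_inv_cancel₀ (hne2 l)
    rw [h1, Matrix.diagonal_one]
  -- eigenvector
  set w : Fin K → ℝ := fun l => dt0 * γ * dt l / (1 + δ * dt l) ^ 2 with hw
  have hΔg : Δ⁻¹ *ᵥ g = w := by
    rw [hΔinv]; funext l
    rw [Matrix.mulVec_diagonal, hg' l, hw]
    exact inv_mul_eq_div _ _
  have hAw : A *ᵥ w = (ρ ^ 2 * γ * γt) • w := by
    funext l
    simp only [Matrix.mulVec, dotProduct, Pi.smul_apply, smul_eq_mul]
    have h1 : ∀ m ∈ Finset.univ, A l m * w m =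
        (γ / K * dt l / (1 + δ * dt l) ^ 2 * (dt0 * γ)) * ((dt m) ^ 2 / (1 + δ * dt m) ^ 2) := by
      intro m _; rw [hAe l m, hw]; ring
    rw [Finset.sum_congr rfl h1, ← Finset.mul_sum, hSe]
    simp only [hw]
    field_simp [hKne, hne2 l]
  have hAA : A * A = (ρ ^ 2 * γ * γt) • A := by
    ext l m
    simp only [Matrix.mul_apply, Matrix.smul_apply, smul_eq_mul]
    have h1 : ∀ j ∈ Finset.univ, A l j * A j m =
        (γ / K * dt l / (1 + δ * dt l) ^ 2 * (γ / K * dt m)) * ((dt j) ^ 2 / (1 + δ * dt j) ^ 2) := by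
      intro j _; rw [hAe l j, hAe j m]; ring
    rw [Finset.sum_congr rfl h1, ← Finset.mul_sum, hSe, hAe l m]
    field_simp [hKne, hne2 l]
  have hinv : (1 - A)⁻¹ = 1 + (1 - ρ ^ 2 * γ * γt)⁻¹ • A := by
    apply Matrix.inv_eq_right_inv
    have h2 : (1 - A) * (1 + (1 - ρ ^ 2 * γ * γt)⁻¹ • A)
        = 1 + ((1 - ρ ^ 2 * γ * γt)⁻¹ - 1 - (1 - ρ ^ 2 * γ * γt)⁻¹ * (ρ ^ 2 * γ * γt)) • A := by
      rw [sub_mul, mul_add, mul_add, one_mul, one_mul, mul_one, Matrix.mul_smul, hAA,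
        smul_smul]
      rw [sub_smul, sub_smul, one_smul]
      abel
    rw [h2]
    have h3 : ((1 - ρ ^ 2 * γ * γt)⁻¹ - 1 - (1 - ρ ^ 2 * γ * γt)⁻¹ * (ρ ^ 2 * γ * γt)) = 0 := by
      field_simp
      ring
    rw [h3, zero_smul, add_zero]
  have hmain : ((1 - A)⁻¹ * Δ⁻¹) *ᵥ g = (1 - ρ ^ 2 * γ * γt)⁻¹ • w := by
    rw [← Matrix.mulVec_mulVec, hΔg, hinv, Matrix.add_mulVec, Matrix.one_mulVec,
      Matrix.smul_mulVec, hAw, smul_smul]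
    funext l
    simp only [Pi.add_apply, Pi.smul_apply, smul_eq_mul]
    field_simp
    ring
  -- final computation
  have hdotfinal : g ⬝ᵥ ((1 - ρ ^ 2 * γ * γt)⁻¹ • w)
      = (1 - ρ ^ 2 * γ * γt)⁻¹ * (dt0 ^ 2 * γ ^ 2 * (ρ ^ 2 * (K * γt))) := by
    simp only [dotProduct, Pi.smul_apply, smul_eq_mul]
    have h1 : ∀ l ∈ Finset.univ, g l * ((1 - ρ ^ 2 * γ * γt)⁻¹ * w l)
        = ((1 - ρ ^ 2 * γ * γt)⁻¹ * (dt0 ^ 2 * γ ^ 2)) * ((dt l) ^ 2 / (1 + δ * dt l) ^ 2) := by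
      intro l _; rw [hg' l, hw]; ring
    rw [Finset.sum_congr rfl h1, ← Finset.mul_sum, hSe]
    ring
  have hfirst : ∑ n, (dt0 * d n) ^ 2 * (t n) ^ 2 = dt0 ^ 2 * (K * γ) := by
    rw [← hsumγ, Finset.mul_sum]; exact Finset.sum_congr rfl fun n _ => by ring
  rw [hΘ, hΩ, hmain, hdotfinal, hfirst]
  field_simp
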